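/- Let ξ = diag(λ_1,...,λ_n), let μ satisfy μ_{ij} = 0 whenever λ_i = λ_j, and let (P_m)_{m≥0} be a sequence of n×n matrices with P_0 = Id satisfying [ξ, P_{m+1}] = [P_m, μ] - m·P_m for all m ≥ 0. Then P_m = 0 for all m ≥ 1. -/
import Mathlib

lemma p_key_step
    {K : Type*} [Field K] [CharZero K] {n : ℕ}
    (lam : Fin n → K)
    (μ : Matrix (Fin n) (Fin n) K)
    (hμ : ∀ i j, lam i = lam j → μ i j = 0)
    (P : ℕ → Matrix (Fin n) (Fin n) K)
    (hrec : ∀ m : ℕ, Matrix.diagonal lam * P (m+1) - P (m+1) * Matrix.diagonal lam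
        = (P m * μ - μ * P m) - (m : K) • P m)
    (m : ℕ)
    (hz : (P m * μ - μ * P m) - (m : K) • P m = 0) :
    P (m+1) = 0 := by
  have h1 := hrec m
  rw [hz] at h1
  have hcomm : ∀ i j, lam i ≠ lam j → P (m+1) i j = 0 := by
    intro i j hij
    have e := congrFun (congrFun h1 i) j
    simp only [Matrix.sub_apply, Matrix.diagonal_mul, Matrix.mul_diagonal,
      Matrix.zero_apply] at e
    have : (lam i - lam j) * P (m+1) i j = 0 := by
      have := sub_eq_zero.mp e
      ring_nf
      ring_nf at this
      linear_combination this
    rcases mul_eq_zero.mp this with h | h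
    · exact absurd (sub_eq_zero.mp h) hij
    · exact h
  ext i j
  by_cases hij : lam i = lam j
  · have e := congrFun (congrFun (hrec (m+1)) i) j
    simp only [Matrix.sub_apply, Matrix.diagonal_mul, Matrix.mul_diagonal,
      Matrix.smul_apply, smul_eq_mul] at e
    simp only [Matrix.mul_apply] at e
    have hs1 : ∑ l, P (m+1) i l * μ l j = 0 := by
      refine Finset.sum_eq_zero fun l _ => ?_
      by_cases h : lam i = lam l
      · rw [hμ l j (h.symm.trans hij), mul_zero]
      · rw [hcomm i l h, zero_mul]
    have hs2 : ∑ l, μ i l * P (m+1) l j = 0 := by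
      refine Finset.sum_eq_zero fun l _ => ?_
      by_cases h : lam l = lam j
      · rw [hμ i l (hij.trans h.symm), zero_mul]
      · rw [hcomm l j h, mul_zero]
    rw [hs1, hs2] at e
    have L0 : lam i * P (m+2) i j - P (m+2) i j * lam j = 0 := by
      rw [hij]; ring
    rw [L0] at e
    have hker : ((m : K) + 1) * P (m+1) i j = 0 := by
      push_cast at e; linear_combination e
    have hne : ((m : K) + 1) ≠ 0 := Nat.cast_add_one_ne_zero m
    simpa [hne] using mul_eq_zero.mp hker
  · simpa using hcomm i j hij

/-- The inductive vanishing of the sequence `P_m` satisfying `P_0 = Id` and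
`[ξ, P_{m+1}] = [P_m, μ] - m·P_m`, when `ξ = diag(λ)` and `μ_{ij} = 0`
whenever `λ_i = λ_j`. -/
theorem p_matrices_vanish
    {K : Type*} [Field K] [CharZero K] {n : ℕ}
    (lam : Fin n → K)
    (μ : Matrix (Fin n) (Fin n) K)
    (hμ : ∀ i j, lam i = lam j → μ i j = 0)
    (P : ℕ → Matrix (Fin n) (Fin n) K)
    (hP0 : P 0 = 1)
    (hrec : ∀ m : ℕ, Matrix.diagonal lam * P (m+1) - P (m+1) * Matrix.diagonal lam
        = (P m * μ - μ * P m) - (m : K) • P m) :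
    ∀ m : ℕ, 1 ≤ m → P m = 0 := by
  intro m hm
  induction m, hm using Nat.le_induction with
  | base =>
    apply p_key_step lam μ hμ P hrec 0
    simp [hP0]
  | succ k hk ih =>
    apply p_key_step lam μ hμ P hrec k
    simp [ih]
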